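/- A finite dataset D is strictly naively Nash rationalizable if and only if it satisfies both N-SARP and NN-SARP. -/

import Mathlib

def maxSet {X : Type} (S : Set X) (pref : X → X → Prop) : Set X :=
  {x | x ∈ S ∧ ∀ y ∈ S, pref x y}

def WeakOrder {X : Type} (pref : X → X → Prop) : Prop :=
  (∀ a b, pref a b ∨ pref b a) ∧ Transitive pref

def sec1 {X₁ X₂ : Type} (B : Set (X₁ × X₂)) (a : X₁) : Set (X₁ × X₂) :=
  {y ∈ B | y.1 = a}

def sec2 {X₁ X₂ : Type} (B : Set (X₁ × X₂)) (b : X₂) : Set (X₁ × X₂) :=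
  {y ∈ B | y.2 = b}

def NSARP {K X₁ X₂ : Type} (x : K → X₁ × X₂) (B : K → Set (X₁ × X₂)) : Prop :=
  ¬ ∃ (L : ℕ) (k : Fin (L + 1) → K), ∀ l : Fin (L + 1),
      x (k l) ≠ x (k (l + 1)) ∧ x (k l) ∈ sec1 (B (k (l + 1))) (x (k (l + 1))).1

def NNSARP {K X₁ X₂ : Type} (x : K → X₁ × X₂) (B : K → Set (X₁ × X₂)) : Prop :=
  ¬ ∃ (L : ℕ) (k : Fin (L + 1) → K), ∀ l : Fin (L + 1),
      x (k l) ≠ x (k (l + 1)) ∧ x (k l) ∈ sec2 (B (k (l + 1))) (x (k (l + 1))).2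

def Cond1 {K X₁ X₂ : Type} (x : K → X₁ × X₂) (B : K → Set (X₁ × X₂)) : Prop :=
  ∀ S : Set K, S.Nonempty →
    ¬ (⋃ k ∈ S, sec1 (B k) (x k).1) ⊆ ⋃ k ∈ S, (B k \ sec1 (B k) (x k).1)

def Cond2 {K X₁ X₂ : Type} (x : K → X₁ × X₂) (B : K → Set (X₁ × X₂)) : Prop :=
  ¬ ∃ (L : ℕ) (k : Fin (L + 1) → K), ∀ l : Fin (L + 1),
      x (k l) ≠ x (k (l + 1)) ∧ x (k l) ∈ sec1 (B (k (l + 1))) (x (k l)).1 ∧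
      sec1 (B (k (l + 1))) (x (k l)).1 ⊆ sec1 (B (k l)) (x (k l)).1

def NaiveRat {K X₁ X₂ : Type} (x : K → X₁ × X₂) (B : K → Set (X₁ × X₂)) : Prop :=
  ∃ p1 p2 : X₁ × X₂ → X₁ × X₂ → Prop, WeakOrder p1 ∧ WeakOrder p2 ∧
    ∀ k, (∃ z, maxSet (B k) p1 = {z} ∧ z ∈ sec1 (B k) (x k).1) ∧
      maxSet (sec1 (B k) (x k).1) p2 = {x k}

def NaiveNashRat {K X₁ X₂ : Type} (x : K → X₁ × X₂) (B : K → Set (X₁ × X₂)) : Prop :=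
  ∃ p1 p2 : X₁ × X₂ → X₁ × X₂ → Prop, WeakOrder p1 ∧ WeakOrder p2 ∧
    ∀ k, x k ∈ maxSet (sec2 (B k) (x k).2) p1 ∧
      maxSet (sec1 (B k) (x k).1) p2 = {x k}

def StrictNaiveNashRat {K X₁ X₂ : Type} (x : K → X₁ × X₂) (B : K → Set (X₁ × X₂)) : Prop :=
  ∃ p1 p2 : X₁ × X₂ → X₁ × X₂ → Prop, WeakOrder p1 ∧ WeakOrder p2 ∧
    ∀ k, maxSet (sec2 (B k) (x k).2) p1 = {x k} ∧
      maxSet (sec1 (B k) (x k).1) p2 = {x k}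

def SophRat {K X₁ X₂ : Type} (x : K → X₁ × X₂) (B : K → Set (X₁ × X₂)) : Prop :=
  ∃ p1 p2 : X₁ × X₂ → X₁ × X₂ → Prop, WeakOrder p1 ∧ WeakOrder p2 ∧
    ∀ k, maxSet (⋃ a ∈ Prod.fst '' B k, maxSet (sec1 (B k) a) p2) p1 = {x k}

lemma path_of_transGen {α : Type} {R : α → α → Prop} {u b : α}
    (h : Relation.TransGen R u b) :
    ∃ (n : ℕ) (g : ℕ → α), g 0 = u ∧ g (n + 1) = b ∧ ∀ i ≤ n, R (g i) (g (i + 1)) := by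
  induction h with
  | @single c hab =>
      refine ⟨0, fun i => if i = 0 then u else c, ?_, ?_, ?_⟩
      · show (if (0:ℕ) = 0 then u else c) = u
        rw [if_pos rfl]
      · show (if (1:ℕ) = 0 then u else c) = c
        rw [if_neg (by omega)]
      · intro i hi
        interval_cases i
        show R (if (0:ℕ) = 0 then u else c) (if (1:ℕ) = 0 then u else c)
        rw [if_pos rfl, if_neg (by omega)]
        exact hab
  | @tail b c hab hbc ih =>
      obtain ⟨n, g, hg0, hgn, hstep⟩ := ih
      refine ⟨n + 1, fun i => if i = n + 2 then c else g i, ?_, ?_, ?_⟩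
      · show (if 0 = n + 2 then c else g 0) = u
        rw [if_neg (by omega)]; exact hg0
      · show (if n + 1 + 1 = n + 2 then c else g (n + 1 + 1)) = c
        rw [if_pos (by omega)]
      · intro i hi
        show R (if i = n + 2 then c else g i) (if i + 1 = n + 2 then c else g (i + 1))
        rcases eq_or_lt_of_le hi with hcase | hcase
        · subst hcase
          rw [if_neg (by omega), if_pos (by omega), hgn]
          exact hbc
        · rw [if_neg (by omega), if_neg (by omega)]
          exact hstep i (by omega)

lemma cycle_of_transGen {α : Type} {R : α → α → Prop} {u : α}
    (h : Relation.TransGen R u u) :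
    ∃ (L : ℕ) (f : Fin (L + 1) → α), ∀ l, R (f l) (f (l + 1)) := by
  obtain ⟨n, g, hg0, hgn, hstep⟩ := path_of_transGen h
  refine ⟨n, fun i => g i.val, fun l => ?_⟩
  show R (g l.val) (g ((l + 1 : Fin (n + 1)).val))
  by_cases hl : l = Fin.last n
  · have h1 : ((l + 1 : Fin (n + 1)) : ℕ) = 0 := by
      rw [Fin.val_add_one, if_pos hl]
    have h2 : (l : ℕ) = n := by rw [hl]; rfl
    rw [h1, h2, hg0, ← hgn]
    exact hstep n le_rfl
  · have h1 : ((l + 1 : Fin (n + 1)) : ℕ) = l.val + 1 := by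
      rw [Fin.val_add_one, if_neg hl]
    rw [h1]
    exact hstep l.val (by have := Fin.val_lt_last hl; omega)

open scoped Fin.NatCast Fin.CommRing

lemma no_cycle_of_rat {α K : Type} (x : K → α) (sec : K → Set α)
    (p : α → α → Prop) (hw : WeakOrder p)
    (hmax : ∀ k, maxSet (sec k) p = {x k}) :
    ¬ ∃ (L : ℕ) (k : Fin (L + 1) → K), ∀ l : Fin (L + 1),
        x (k l) ≠ x (k (l + 1)) ∧ x (k l) ∈ sec (k (l + 1)) := by
  rintro ⟨L, k, hcyc⟩
  obtain ⟨htot, htrans⟩ := hw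
  set s : α → α → Prop := fun a b => p a b ∧ ¬ p b a with hs
  have hstep : ∀ l : Fin (L + 1), s (x (k (l + 1))) (x (k l)) := by
    intro l
    obtain ⟨hne, hmem⟩ := hcyc l
    have hx1 : x (k (l + 1)) ∈ maxSet (sec (k (l + 1))) p := by
      rw [hmax (k (l + 1))]; rfl
    have h1 : p (x (k (l + 1))) (x (k l)) := hx1.2 _ hmem
    refine ⟨h1, fun h2 => ?_⟩
    have hmm : x (k l) ∈ maxSet (sec (k (l + 1))) p :=
      ⟨hmem, fun y hy => htrans h2 (hx1.2 y hy)⟩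
    rw [hmax (k (l + 1))] at hmm
    exact hne hmm
  have strans : ∀ a b c, s a b → s b c → s a c := by
    rintro a b c ⟨h1, h2⟩ ⟨h3, h4⟩
    exact ⟨htrans h1 h3, fun h => h4 (htrans h h1)⟩
  have key : ∀ n : ℕ, s (x (k ((n : Fin (L + 1)) + 1))) (x (k 0)) := by
    intro n
    induction n with
    | zero => simpa using hstep 0
    | succ m ih =>
      have h1 := strans _ _ _ (hstep ((m : Fin (L + 1)) + 1)) ih
      have h2 : ((m + 1 : ℕ) : Fin (L + 1)) = (m : Fin (L + 1)) + 1 := by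
        push_cast; ring
      rw [h2]
      exact h1
  have hLL := key L
  have hcast : ((L : ℕ) : Fin (L + 1)) + 1 = 0 := by
    have h3 : ((L + 1 : ℕ) : Fin (L + 1)) = 0 := Fin.natCast_self (L + 1)
    rw [← h3]; push_cast; ring
  rw [hcast] at hLL
  exact hLL.2 ((htot _ _).elim id id)

lemma rationalize {α K : Type} [Fintype K] (x : K → α) (sec : K → Set α)
    (hx : ∀ k, x k ∈ sec k)
    (hnc : ¬ ∃ (L : ℕ) (k : Fin (L + 1) → K), ∀ l : Fin (L + 1),
        x (k l) ≠ x (k (l + 1)) ∧ x (k l) ∈ sec (k (l + 1))) :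
    ∃ p : α → α → Prop, WeakOrder p ∧ ∀ k, maxSet (sec k) p = {x k} := by
  classical
  set R : α → α → Prop := fun b a => (∃ k, b = x k ∧ a ∈ sec k) ∧ a ≠ b with hR
  set T : α → α → Prop := Relation.TransGen R with hT
  have hirr : ∀ u, ¬ T u u := by
    intro u hu
    obtain ⟨L, f, hf⟩ := cycle_of_transGen hu
    choose kk hk1 hk2 using fun l => (hf l).1
    have hne : ∀ l, f (l + 1) ≠ f l := fun l => (hf l).2
    refine hnc ⟨L, fun l => kk (-(l + 1)), fun l => ?_⟩
    show x (kk (-(l + 1))) ≠ x (kk (-(l + 1 + 1))) ∧ x (kk (-(l + 1))) ∈ sec (kk (-(l + 1 + 1)))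
    have hj : (-(l + 1) : Fin (L + 1)) = -(l + 1 + 1) + 1 := by ring
    rw [hj]
    set j : Fin (L + 1) := -(l + 1 + 1) with hjdef
    rw [← hk1 (j + 1), ← hk1 j]
    exact ⟨hne j, hk2 j⟩
  have hTtrans : ∀ {a b c}, T a b → T b c → T a c := fun h1 h2 =>
    Relation.TransGen.trans h1 h2
  set D : Set α := Set.range x with hD
  have hDfin : D.Finite := Set.finite_range x
  set h : α → ℕ := fun u => if u ∈ D then 1 + ({v ∈ D | T u v}.ncard) else 0 with hh
  have key : ∀ k, ∀ a ∈ sec k, a ≠ x k → h a < h (x k) := by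
    intro k a ha hane
    have hTa : T (x k) a := Relation.TransGen.single ⟨⟨k, rfl, ha⟩, hane⟩
    have hxk : x k ∈ D := ⟨k, rfl⟩
    have hfin1 : {v ∈ D | T (x k) v}.Finite := hDfin.subset (Set.sep_subset _ _)
    have hxkval : h (x k) = 1 + ({v ∈ D | T (x k) v}.ncard) := if_pos hxk
    by_cases haD : a ∈ D
    · have hsub : {v ∈ D | T a v} ⊂ {v ∈ D | T (x k) v} := by
        constructor
        · rintro v ⟨hv1, hv2⟩
          exact ⟨hv1, hTtrans hTa hv2⟩
        · intro hcon
          exact hirr a (hcon ⟨haD, hTa⟩).2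
      have hlt := Set.ncard_lt_ncard hsub hfin1
      have haval : h a = 1 + ({v ∈ D | T a v}.ncard) := if_pos haD
      rw [hxkval, haval]
      omega
    · have haval : h a = 0 := if_neg haD
      rw [hxkval, haval]
      omega
  refine ⟨fun u v => h v ≤ h u, ⟨fun a b => ?_, fun a b c h1 h2 => le_trans h2 h1⟩, ?_⟩
  · exact (le_total (h b) (h a)).imp id id
  · intro k
    ext z
    constructor
    · rintro ⟨hzS, hzmax⟩
      by_contra hzne
      have h1 : h z < h (x k) := key k z hzS hzne
      have h2 : h (x k) ≤ h z := hzmax (x k) (hx k)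
      omega
    · rintro rfl
      refine ⟨hx k, fun y hy => ?_⟩
      by_cases hyx : y = x k
      · rw [hyx]
      · exact le_of_lt (key k y hy hyx)

theorem strict_naive_nash_rationalizable_iff_NSARP_and_NNSARP
    {K X₁ X₂ : Type} [Fintype K]
    (x : K → X₁ × X₂) (B : K → Set (X₁ × X₂)) (hmem : ∀ k, x k ∈ B k) :
    StrictNaiveNashRat x B ↔ NSARP x B ∧ NNSARP x B := by
  constructor
  · rintro ⟨p1, p2, hw1, hw2, hk⟩
    exact ⟨no_cycle_of_rat x (fun k => sec1 (B k) (x k).1) p2 hw2 (fun k => (hk k).2),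
      no_cycle_of_rat x (fun k => sec2 (B k) (x k).2) p1 hw1 (fun k => (hk k).1)⟩
  · rintro ⟨h1, h2⟩
    obtain ⟨p2, hw2, hm2⟩ := rationalize x (fun k => sec1 (B k) (x k).1)
      (fun k => ⟨hmem k, rfl⟩) h1
    obtain ⟨p1, hw1, hm1⟩ := rationalize x (fun k => sec2 (B k) (x k).2)
      (fun k => ⟨hmem k, rfl⟩) h2
    exact ⟨p1, p2, hw1, hw2, fun k => ⟨hm1 k, hm2 k⟩⟩
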